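/- Let a > 0, λ ∈ ℂ with |λ| < 1, and set M = (|λ| + e^{-2a})/(1 + e^{-2a}|λ|) and δ = min(-½·log M, a). Then δ > 0, and for all integers m, n: e^{-2a|m|} · M^{|m+n|} ≤ e^{-δ(|m|+|n|)}. -/

import Mathlib

theorem stmt_19 (a : ℝ) (ha : 0 < a) (l : ℂ) (hl : ‖l‖ < 1) :
    let M : ℝ := (‖l‖ + Real.exp (-2 * a)) / (1 + Real.exp (-2 * a) * ‖l‖)
    let δ : ℝ := min (-(1 / 2) * Real.log M) a
    0 < δ ∧ ∀ m n : ℤ,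
      Real.exp (-2 * a * |m|) * M ^ (m + n).natAbs ≤ Real.exp (-δ * (|m| + |n|)) := by
  intro M δ
  have hL : 0 ≤ ‖l‖ := norm_nonneg l
  have hE : 0 < Real.exp (-2 * a) := Real.exp_pos _
  have hE1 : Real.exp (-2 * a) < 1 := by
    rw [Real.exp_lt_one_iff]; linarith
  have hden : 0 < 1 + Real.exp (-2 * a) * ‖l‖ := by positivity
  have hM0 : 0 < M := div_pos (by linarith) hden
  have hM1 : M < 1 := by
    rw [div_lt_one hden]; nlinarith
  have hlogM : Real.log M < 0 := Real.log_neg hM0 hM1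
  have hδ : 0 < δ := lt_min (by linarith) ha
  refine ⟨hδ, ?_⟩
  intro m n
  have hδa : δ ≤ a := min_le_right _ _
  have hδM : Real.log M ≤ -2 * δ := by
    have := min_le_left (-(1 / 2) * Real.log M) a
    have h2 : δ ≤ -(1 / 2) * Real.log M := min_le_left _ _
    linarith
  have hM : M ≤ Real.exp (-2 * δ) := by
    calc M = Real.exp (Real.log M) := (Real.exp_log hM0).symm
    _ ≤ _ := Real.exp_le_exp.mpr hδM
  set k : ℕ := (m + n).natAbs with hk
  have hkr : (k : ℝ) = |(m : ℝ) + (n : ℝ)| := by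
    rw [hk, Nat.cast_natAbs]; push_cast; ring_nf
  have h1 : Real.exp (-2 * a * |(m : ℝ)|) ≤ Real.exp (-2 * δ * |(m : ℝ)|) := by
    apply Real.exp_le_exp.mpr
    nlinarith [abs_nonneg ((m : ℝ))]
  have h2 : M ^ k ≤ Real.exp (-2 * δ) ^ k := pow_le_pow_left₀ hM0.le hM _
  have h3 : Real.exp (-2 * δ) ^ k = Real.exp ((k : ℝ) * (-2 * δ)) :=
    (Real.exp_nat_mul _ _).symm
  push_cast
  calc Real.exp (-2 * a * |(m : ℝ)|) * M ^ k
      ≤ Real.exp (-2 * δ * |(m : ℝ)|) * Real.exp ((k : ℝ) * (-2 * δ)) := by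
        rw [← h3]; exact mul_le_mul h1 h2 (pow_nonneg hM0.le _) (Real.exp_pos _).le
    _ = Real.exp (-2 * δ * |(m : ℝ)| + (k : ℝ) * (-2 * δ)) := (Real.exp_add _ _).symm
    _ ≤ Real.exp (-δ * (|(m : ℝ)| + |(n : ℝ)|)) := by
        apply Real.exp_le_exp.mpr
        have habs : |(n : ℝ)| ≤ |(m : ℝ)| + (k : ℝ) := by
          rw [hkr]
          have := abs_sub_abs_le_abs_sub ((m : ℝ) + n) (m : ℝ)
          simp at this
          have h5 : |((m : ℝ) + n) - m| ≤ |(m : ℝ) + n| + |(m : ℝ)| := abs_sub _ _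
          have h6 : ((m : ℝ) + n) - m = n := by ring
          rw [h6] at h5
          linarith
        nlinarith [abs_nonneg ((m : ℝ)), hδ.le]
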